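/- For all integers k and t with 1 ≤ t ≤ k there exists a threshold N(k, t) such that for every n > N(k, t), every t-intersecting family F of k-element subsets of [n] satisfies |F| ≤ C(n-t, k-t). -/

import Mathlib

open Finset

lemma count_superset (n s k : ℕ) (F : Finset (Finset ℕ))
    (hsub : ∀ A ∈ F, A ⊆ Finset.Icc 1 n) (hcard : ∀ A ∈ F, A.card = k)
    (S : Finset ℕ) (hS : S ⊆ Finset.Icc 1 n) (hScard : S.card = s) :
    (F.filter (fun B => S ⊆ B)).card ≤ (n - s).choose (k - s) := by
  have hIcc : (Finset.Icc 1 n).card = n := by simp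
  have htgt : ((Finset.Icc 1 n \ S).powersetCard (k - s)).card = (n - s).choose (k - s) := by
    rw [card_powersetCard, card_sdiff_of_subset hS, hIcc, hScard]
  rw [← htgt]
  apply Finset.card_le_card_of_injOn (fun B => B \ S)
  · intro B hB
    simp only [coe_filter, Set.mem_setOf_eq, mem_coe, mem_filter] at hB
    obtain ⟨hBF, hSB⟩ := hB
    rw [mem_coe, mem_powersetCard]
    exact ⟨sdiff_subset_sdiff (hsub B hBF) (le_refl S),
      by rw [card_sdiff_of_subset hSB, hcard B hBF, hScard]⟩
  · intro B1 h1 B2 h2 h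
    simp only [coe_filter, Set.mem_setOf_eq] at h1 h2
    conv_lhs => rw [← sdiff_union_of_subset h1.2]
    conv_rhs => rw [← sdiff_union_of_subset h2.2]
    exact congrArg (· ∪ S) h

/-- **Erdős–Ko–Rado, t-intersecting, large n.** For all `1 ≤ t ≤ k`
there is a threshold `N` such that for every `n > N`, every `t`-intersecting family
of `k`-element subsets of `[n]` satisfies `|F| ≤ C(n-t, k-t)`. -/
theorem ekr_t_intersecting_large_n (k t : ℕ) (ht : 1 ≤ t) (htk : t ≤ k) :
    ∃ N : ℕ, ∀ n : ℕ, N < n →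
      ∀ F : Finset (Finset ℕ),
        (∀ A ∈ F, A ⊆ Finset.Icc 1 n) →
        (∀ A ∈ F, A.card = k) →
        (∀ A ∈ F, ∀ B ∈ F, t ≤ (A ∩ B).card) →
        F.card ≤ (n - t).choose (k - t) := by
  refine ⟨t + k.choose t * k * k + k + 2, fun n hn F hsub hcard hint => ?_⟩
  rcases eq_or_lt_of_le htk with hkt | hkt
  · -- t = k : all members are equal
    subst hkt
    have h1 : F.card ≤ 1 := by
      apply Finset.card_le_one.mpr
      intro A hA B hB
      have hAB := hint A hA B hB
      have hA' : A ∩ B = A := Finset.eq_of_subset_of_card_le Finset.inter_subset_left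
        (by rw [hcard A hA]; exact hAB)
      have hB' : A ∩ B = B := Finset.eq_of_subset_of_card_le Finset.inter_subset_right
        (by rw [hcard B hB]; exact hAB)
      rw [← hA', hB']
    simpa using h1
  -- t < k
  rcases F.eq_empty_or_nonempty with rfl | ⟨A1, hA1⟩
  · simp
  by_cases hcom : ∃ T : Finset ℕ, T.card = t ∧ T ⊆ Finset.Icc 1 n ∧ ∀ B ∈ F, T ⊆ B
  · obtain ⟨T, hTc, hTsub, hTall⟩ := hcom
    have : F.filter (fun B => T ⊆ B) = F := Finset.filter_true_of_mem hTall
    calc F.card = (F.filter (fun B => T ⊆ B)).card := by rw [this]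
      _ ≤ (n - t).choose (k - t) := count_superset n t k F hsub hcard T hTsub hTc
  push_neg at hcom
  -- choose a "witness" set for each t-subset of A1
  have hwit : ∀ T : Finset ℕ, ∃ B : Finset ℕ,
      T ∈ A1.powersetCard t → B ∈ F ∧ ¬ T ⊆ B := by
    intro T
    by_cases hT : T ∈ A1.powersetCard t
    · rw [Finset.mem_powersetCard] at hT
      obtain ⟨B, hBF, hB⟩ := hcom T hT.2 (hT.1.trans (hsub A1 hA1))
      exact ⟨B, fun _ => ⟨hBF, hB⟩⟩
    · exact ⟨∅, fun h => absurd h hT⟩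
  choose BT hBT using hwit
  -- covering
  have hcover : F ⊆ (A1.powersetCard t).biUnion (fun T =>
      (BT T \ T).biUnion (fun x => F.filter (fun B => insert x T ⊆ B))) := by
    intro B hB
    have hit := hint A1 hA1 B hB
    obtain ⟨T, hTsub, hTc⟩ := Finset.exists_subset_card_eq hit
    have hTA1 : T ⊆ A1 := hTsub.trans Finset.inter_subset_left
    have hTB : T ⊆ B := hTsub.trans Finset.inter_subset_right
    have hTm : T ∈ A1.powersetCard t := Finset.mem_powersetCard.mpr ⟨hTA1, hTc⟩
    obtain ⟨hBTF, hBTns⟩ := hBT T hTm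
    have hit2 := hint B hB (BT T) hBTF
    have hnotsub : ¬ (B ∩ BT T ⊆ T) := by
      intro hss
      have h1 : B ∩ BT T ⊆ T ∩ BT T := fun x hx =>
        Finset.mem_inter.mpr ⟨hss hx, (Finset.mem_inter.mp hx).2⟩
      have h2 : T ∩ BT T ⊂ T := by
        refine ⟨Finset.inter_subset_left, fun hc => hBTns ?_⟩
        intro x hx
        exact (Finset.mem_inter.mp (hc hx)).2
      have := (Finset.card_le_card h1).trans_lt (Finset.card_lt_card h2)
      rw [hTc] at this
      omega
    obtain ⟨x, hxm, hxT⟩ := Finset.not_subset.mp hnotsub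
    rw [Finset.mem_inter] at hxm
    refine Finset.mem_biUnion.mpr ⟨T, hTm, Finset.mem_biUnion.mpr
      ⟨x, Finset.mem_sdiff.mpr ⟨hxm.2, hxT⟩, Finset.mem_filter.mpr ⟨hB, ?_⟩⟩⟩
    exact Finset.insert_subset hxm.1 hTB
  set C' := (n - (t + 1)).choose (k - (t + 1)) with hC'
  have hbound : F.card ≤ k.choose t * (k * C') := by
    calc F.card ≤ _ := Finset.card_le_card hcover
      _ ≤ ∑ T ∈ A1.powersetCard t,
          ((BT T \ T).biUnion (fun x => F.filter (fun B => insert x T ⊆ B))).card :=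
        Finset.card_biUnion_le
      _ ≤ ∑ T ∈ A1.powersetCard t, (k * C') := by
        apply Finset.sum_le_sum
        intro T hTm
        obtain ⟨hBTF, _⟩ := hBT T hTm
        rw [Finset.mem_powersetCard] at hTm
        calc ((BT T \ T).biUnion (fun x => F.filter (fun B => insert x T ⊆ B))).card
            ≤ ∑ x ∈ BT T \ T, (F.filter (fun B => insert x T ⊆ B)).card :=
              Finset.card_biUnion_le
          _ ≤ ∑ _x ∈ BT T \ T, C' := by
              apply Finset.sum_le_sum
              intro x hx
              rw [Finset.mem_sdiff] at hx
              apply count_superset n (t+1) k F hsub hcard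
              · exact Finset.insert_subset (hsub (BT T) hBTF hx.1)
                  (hTm.1.trans (hsub A1 hA1))
              · rw [Finset.card_insert_of_notMem hx.2, hTm.2]
          _ = (BT T \ T).card * C' := by rw [Finset.sum_const, smul_eq_mul]
          _ ≤ k * C' := by
              apply Nat.mul_le_mul_right
              calc (BT T \ T).card ≤ (BT T).card := Finset.card_le_card Finset.sdiff_subset
                _ = k := hcard _ hBTF
      _ = k.choose t * (k * C') := by
          rw [Finset.sum_const, smul_eq_mul, Finset.card_powersetCard, hcard A1 hA1]
  refine hbound.trans ?_
  -- arithmetic: k.choose t * (k * C') ≤ (n - t).choose (k - t)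
  have hm : n - (t + 1) + 1 = n - t := by omega
  have hr : k - (t + 1) + 1 = k - t := by omega
  have hid := Nat.add_one_mul_choose_eq (n - (t + 1)) (k - (t + 1))
  rw [hm, hr] at hid
  have hktpos : 0 < k - t := by omega
  apply Nat.le_of_mul_le_mul_right _ hktpos
  calc k.choose t * (k * C') * (k - t) = (k.choose t * k * (k - t)) * C' := by ring
    _ ≤ (n - t) * C' := by
        apply Nat.mul_le_mul_right
        have : k.choose t * k * (k - t) ≤ k.choose t * k * k := by
          apply Nat.mul_le_mul_left; omega
        omega
    _ = (n - t).choose (k - t) * (k - t) := by rw [← hid]
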